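/- Let L be a group, K a group with |K| < |L|, and suppose L is simple and there exist g ∈ L and m ∈ ω such that every element of L is a product of at most m conjugates of g. Then every homomorphism from the cartesian power L^κ to K is trivial, for any cardinal κ. -/

import Mathlib

universe u

private lemma stmt8_aux {G : Type*} [Monoid G] (t : G → G) (k d : ℕ) (v : Fin k → G) :
    (List.ofFn (fun j : Fin (k + d) =>
        t (if h : (j : ℕ) < k then v ⟨j, h⟩ else 1))).prod
      = (List.ofFn (fun j : Fin k => t (v j))).prod * (t 1) ^ d := by
  rw [List.ofFn_add, List.prod_append]
  have h1 : ∀ j : Fin k,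
      t (if h : ((Fin.castAdd d j : Fin (k + d)) : ℕ) < k then v ⟨_, h⟩ else 1) = t (v j) := by
    intro j
    rw [dif_pos (by simp [j.isLt])]
    congr 1
  have h2 : ∀ j : Fin d,
      t (if h : ((Fin.natAdd k j : Fin (k + d)) : ℕ) < k then v ⟨_, h⟩ else 1) = t 1 := by
    intro j
    rw [dif_neg (by simp)]
  simp only [h1, h2]
  rw [List.ofFn_const, List.prod_replicate]
  congr 3
  funext j
  simp

/-- Let `L`, `K` be groups with `|K| < |L|`, `L` simple, and suppose there
are `g ∈ L` and `m ∈ ω` such that every element of `L` is a product of at most `m`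
conjugates of `g`. Then every homomorphism from a cartesian power `L^κ` to `K` is
trivial. -/
theorem stmt_8 {L K : Type u} [Group L] [Group K]
    (hcard : Cardinal.mk K < Cardinal.mk L)
    [IsSimpleGroup L]
    (g : L) (m : ℕ)
    (hconj : ∀ x : L, ∃ k ≤ m, ∃ y : Fin k → L, x = (List.ofFn (fun j => (y j)⁻¹ * g * y j)).prod)
    (κ : Type u) (σ : (∀ _ : κ, L) →* K) :
    σ = 1 := by
  classical
  -- Key: σ kills every "indicator" element
  have key : ∀ (S : Set κ) (h : L), σ (S.mulIndicator fun _ => h) = 1 := by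
    intro S h
    set e : L →* (∀ _ : κ, L) :=
      { toFun := fun a => S.mulIndicator fun _ => a
        map_one' := by funext i; simp
        map_mul' := by
          intro a b
          funext i
          by_cases hi : i ∈ S <;>
            simp [Set.mulIndicator_of_mem, Set.mulIndicator_of_notMem, hi] } with he
    have hn : (σ.comp e).ker.Normal := MonoidHom.normal_ker _
    rcases hn.eq_bot_or_eq_top with hb | ht
    · exfalso
      have hinj : Function.Injective (σ.comp e) :=
        (σ.comp e).ker_eq_bot_iff.mp hb
      exact absurd (Cardinal.mk_le_of_injective hinj) (not_le.mpr hcard)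
    · have : h ∈ (σ.comp e).ker := ht ▸ Subgroup.mem_top h
      simpa [MonoidHom.mem_ker, he] using this
  have hconst : ∀ h : L, σ (fun _ => h) = 1 := by
    intro h
    simpa using key Set.univ h
  -- σ kills elements with coordinates powers of g with bounded exponents
  have pow1 : ∀ n (e : κ → ℕ), (∀ i, e i ≤ n) → σ (fun i => g ^ e i) = 1 := by
    intro n
    induction n with
    | zero =>
      intro e he
      have : (fun i => g ^ e i) = fun _ : κ => (1 : L) := by
        funext i; simp [Nat.le_zero.mp (he i)]
      rw [this]
      exact map_one σ
    | succ n ih =>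
      intro e he
      have hsplit : (fun i => g ^ e i) =
          (Set.mulIndicator {i | 1 ≤ e i} fun _ => g) * fun i => g ^ (e i - 1) := by
        funext i
        simp only [Pi.mul_apply]
        by_cases hi : 1 ≤ e i
        · rw [Set.mulIndicator_of_mem (show i ∈ {i | 1 ≤ e i} from hi)]
          conv_lhs => rw [show e i = 1 + (e i - 1) by omega]
          rw [pow_add, pow_one]
        · rw [Set.mulIndicator_of_notMem (show i ∉ {i | 1 ≤ e i} from hi)]
          simp [show e i = 0 by omega]
      rw [hsplit, map_mul, key, ih (fun i => e i - 1) (fun i => by show e i - 1 ≤ n; have := he i; omega),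
        one_mul]
  ext x
  show σ x = 1
  choose k hk y hy using fun i => hconj (x i)
  have hxi : ∀ i : κ,
      (List.ofFn (fun j : Fin m =>
        (if h : (j : ℕ) < k i then y i ⟨j, h⟩ else 1)⁻¹ * g *
        (if h : (j : ℕ) < k i then y i ⟨j, h⟩ else 1))).prod
        = x i * g ^ (m - k i) := by
    intro i
    obtain ⟨d, hd⟩ : ∃ d, m = k i + d := ⟨m - k i, (Nat.add_sub_cancel' (hk i)).symm⟩
    subst hd
    rw [Nat.add_sub_cancel_left]
    have := stmt8_aux (fun a => a⁻¹ * g * a) (k i) d (y i)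
    rw [this, ← hy i]
    simp
  set z : Fin m → ∀ _ : κ, L :=
    fun j i => if h : (j : ℕ) < k i then y i ⟨j, h⟩ else 1 with hz
  set P : ∀ _ : κ, L :=
    (List.ofFn (fun j : Fin m => (z j)⁻¹ * (fun _ => g) * z j)).prod with hP
  have hPx : ∀ i, P i = x i * g ^ (m - k i) := by
    intro i
    rw [hP, Pi.list_prod_apply, List.map_ofFn]
    exact hxi i
  have hP1 : σ P = 1 := by
    rw [hP, map_list_prod, List.map_ofFn]
    have : (σ ∘ fun j : Fin m => (z j)⁻¹ * (fun _ => g) * z j) = fun _ : Fin m => 1 := by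
      funext j
      simp [hconst g]
    rw [this, List.ofFn_const, List.prod_replicate, one_pow]
  have hcσ : σ (fun i => g ^ (m - k i)) = 1 :=
    pow1 m (fun i => m - k i) (fun i => Nat.sub_le _ _)
  have hxP : x = P * (fun i => g ^ (m - k i))⁻¹ := by
    funext i
    simp [hPx i]
  rw [hxP, map_mul, hP1, map_inv, hcσ]
  simp
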